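/- For any permutation σ of [n] with exactly k weak exceedances (indices i with σ(i) ≥ i), the number of crossings plus the number of alignments of σ equals (k−1)(n−k). -/

import Mathlib

open Finset

section CrossAlignAux

variable {n : ℕ}

private lemma card_lt' (c : Fin n) : (univ.filter fun j => j < c).card = c.val := by
  have : (univ.filter fun j => j < c) = Finset.Iio c := by ext j; simp
  rw [this, Fin.card_Iio]

private lemma card_le' (c : Fin n) : (univ.filter fun j => j ≤ c).card = c.val + 1 := by
  have : (univ.filter fun j => j ≤ c) = Finset.Iic c := by ext j; simp
  rw [this, Fin.card_Iic]

private lemma card_vlt (σ : Equiv.Perm (Fin n)) (c : Fin n) :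
    (univ.filter fun j => σ j < c).card = c.val := by
  rw [← card_lt' c]
  apply Finset.card_bij (fun j _ => σ j)
  · intro a ha; simp only [mem_filter, mem_univ, true_and] at *; exact ha
  · intro a _ b _ h; exact σ.injective h
  · intro b hb
    refine ⟨σ.symm b, ?_, by simp⟩
    simp only [mem_filter, mem_univ, true_and, Equiv.apply_symm_apply] at *
    exact hb

private lemma split_count (A B : Fin n → Prop) [DecidablePred A] [DecidablePred B] :
    (univ.filter fun j => A j ∧ B j).card + (univ.filter fun j => A j ∧ ¬ B j).card
      = (univ.filter A).card := by
  rw [← Finset.filter_filter, ← Finset.filter_filter,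
    Finset.card_filter_add_card_filter_not]

private lemma TL (σ : Equiv.Perm (Fin n)) (i : Fin n) :
    (univ.filter fun j => j < i ∧ i ≤ σ j).card
      = (univ.filter fun j => σ j < i ∧ i ≤ j).card := by
  have h1 := split_count (fun j => j < i) (fun j : Fin n => σ j < i)
  have h2 := split_count (fun j : Fin n => σ j < i) (fun j => j < i)
  rw [card_lt'] at h1
  rw [card_vlt] at h2
  simp only [not_lt] at h1 h2
  have e : (univ.filter fun j => j < i ∧ σ j < i)
      = (univ.filter fun j => σ j < i ∧ j < i) := by
    ext j; simp only [mem_filter]; tauto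
  rw [e] at h1
  omega

private lemma TL2 (σ : Equiv.Perm (Fin n)) (i : Fin n) :
    (univ.filter fun j => j < i ∧ σ i < σ j).card + (σ i).val
      = i.val + (univ.filter fun j => i < j ∧ σ j < σ i).card := by
  have h1 := split_count (fun j => j < i) (fun j : Fin n => σ j < σ i)
  have h2 := split_count (fun j : Fin n => σ j < σ i) (fun j => j < i)
  rw [card_lt'] at h1
  rw [card_vlt] at h2
  have e1 : (univ.filter fun j => j < i ∧ ¬ σ j < σ i)
      = (univ.filter fun j => j < i ∧ σ i < σ j) := by
    ext j; simp only [mem_filter, mem_univ, true_and]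
    constructor
    · rintro ⟨h, h2'⟩
      exact ⟨h, lt_of_le_of_ne (not_lt.1 h2') (Ne.symm (fun he => (ne_of_lt h) (σ.injective he)))⟩
    · rintro ⟨h, h2'⟩; exact ⟨h, lt_asymm h2'⟩
  have e2 : (univ.filter fun j => σ j < σ i ∧ ¬ j < i)
      = (univ.filter fun j => i < j ∧ σ j < σ i) := by
    ext j; simp only [mem_filter, mem_univ, true_and]
    constructor
    · rintro ⟨h, h2'⟩
      refine ⟨lt_of_le_of_ne (not_lt.1 h2') ?_, h⟩
      exact fun he => (ne_of_lt h) (he ▸ rfl)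
    · rintro ⟨h, h2'⟩; exact ⟨h2', not_lt.2 h.le⟩
  rw [e1] at h1
  rw [e2] at h2
  have e3 : (univ.filter fun j => j < i ∧ σ j < σ i)
      = (univ.filter fun j => σ j < σ i ∧ j < i) := by
    ext j; simp only [mem_filter]; tauto
  rw [e3] at h1
  omega

private lemma card_fst (P : Fin n × Fin n → Prop) [DecidablePred P] :
    (univ.filter P).card = ∑ i : Fin n, (univ.filter fun j => P (i, j)).card := by
  rw [Finset.card_filter, Fintype.sum_prod_type]
  exact Finset.sum_congr rfl fun i _ => (Finset.card_filter _ _).symm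

private lemma card_snd (P : Fin n × Fin n → Prop) [DecidablePred P] :
    (univ.filter P).card = ∑ j : Fin n, (univ.filter fun i => P (i, j)).card := by
  rw [Finset.card_filter, Fintype.sum_prod_type_right]
  exact Finset.sum_congr rfl fun j _ => (Finset.card_filter _ _).symm

private lemma L2i (σ : Equiv.Perm (Fin n)) (i : Fin n) :
    (univ.filter fun j => j < i ∧ i ≤ σ j ∧ i ≤ σ i).card
    + (univ.filter fun j => i < j ∧ σ j < i ∧ σ i < i).card
    + (if σ i < i then 1 else 0)
    = (univ.filter fun j => σ j < i ∧ i ≤ j).card := by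
  by_cases hi : σ i < i
  · have hA : (univ.filter fun j => j < i ∧ i ≤ σ j ∧ i ≤ σ i) = ∅ := by
      rw [Finset.filter_eq_empty_iff]
      rintro j - ⟨-, -, h⟩; exact absurd h (not_le.2 hi)
    have hQ : (univ.filter fun j => σ j < i ∧ i ≤ j)
        = insert i (univ.filter fun j => i < j ∧ σ j < i ∧ σ i < i) := by
      ext j
      simp only [mem_insert, mem_filter, mem_univ, true_and]
      constructor
      · rintro ⟨h1, h2⟩
        rcases eq_or_lt_of_le h2 with h | h
        · exact Or.inl h.symm
        · exact Or.inr ⟨h, h1, hi⟩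
      · rintro (rfl | ⟨h1, h2, -⟩)
        · exact ⟨hi, le_refl _⟩
        · exact ⟨h2, h1.le⟩
    rw [hA, hQ, Finset.card_insert_of_notMem (by simp)]
    simp [hi]
  · have hB : (univ.filter fun j => i < j ∧ σ j < i ∧ σ i < i) = ∅ := by
      rw [Finset.filter_eq_empty_iff]
      rintro j - ⟨-, -, h⟩; exact hi h
    have hA : (univ.filter fun j => j < i ∧ i ≤ σ j ∧ i ≤ σ i)
        = (univ.filter fun j => j < i ∧ i ≤ σ j) := by
      ext j
      simp only [mem_filter, mem_univ, true_and]
      exact ⟨fun ⟨h1, h2, _⟩ => ⟨h1, h2⟩, fun ⟨h1, h2⟩ => ⟨h1, h2, not_lt.1 hi⟩⟩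
    rw [hA, hB]
    simp only [hi, if_false, Finset.card_empty, add_zero]
    exact TL σ i

private lemma L4j (σ : Equiv.Perm (Fin n)) (j : Fin n) :
    (univ.filter fun i => σ j < i ∧ i ≤ j).card + (if σ j < j then (σ j).val else 0)
      = (if σ j < j then j.val else 0) := by
  by_cases hj : σ j < j
  · simp only [hj, if_true]
    have h := split_count (fun i => i ≤ j) (fun i : Fin n => σ j < i)
    rw [card_le'] at h
    have e1 : (univ.filter fun i => i ≤ j ∧ σ j < i)
        = (univ.filter fun i => σ j < i ∧ i ≤ j) := by
      ext i; simp only [mem_filter]; tauto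
    have e2 : (univ.filter fun i => i ≤ j ∧ ¬ σ j < i)
        = (univ.filter fun i => i ≤ σ j) := by
      ext i; simp only [mem_filter, mem_univ, true_and, not_lt]
      exact ⟨fun ⟨_, h2⟩ => h2, fun h2 => ⟨h2.trans hj.le, h2⟩⟩
    rw [e1, e2, card_le'] at h
    omega
  · have hQ : (univ.filter fun i => σ j < i ∧ i ≤ j) = ∅ := by
      rw [Finset.filter_eq_empty_iff]
      rintro i - ⟨h1, h2⟩
      exact hj (lt_of_lt_of_le h1 h2)
    rw [hQ]
    simp [hj]

private lemma L5i (σ : Equiv.Perm (Fin n)) (i : Fin n) :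
    (univ.filter fun j => σ i < i ∧ j ≤ σ j ∧ j < i ∧ σ i < σ j).card
    + (univ.filter fun j => σ i < i ∧ j < i ∧ σ i < σ j ∧ σ j < j).card
    + (if σ i < i then (σ i).val else 0)
    = (if σ i < i then i.val else 0)
    + (univ.filter fun j => σ i < i ∧ i < j ∧ σ j < σ i).card := by
  by_cases hi : σ i < i
  · simp only [hi, true_and, if_true]
    have h := split_count (fun j => j < i ∧ σ i < σ j) (fun j : Fin n => j ≤ σ j)
    have e1 : (univ.filter fun j => (j < i ∧ σ i < σ j) ∧ j ≤ σ j)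
        = (univ.filter fun j => j ≤ σ j ∧ j < i ∧ σ i < σ j) := by
      ext j; simp only [mem_filter]; tauto
    have e2 : (univ.filter fun j => (j < i ∧ σ i < σ j) ∧ ¬ j ≤ σ j)
        = (univ.filter fun j => j < i ∧ σ i < σ j ∧ σ j < j) := by
      ext j; simp only [mem_filter, not_le]; tauto
    rw [e1, e2] at h
    have h2 := TL2 σ i
    omega
  · simp only [hi, false_and, Finset.filter_false, Finset.card_empty, if_false]

set_option maxHeartbeats 4000000 in
private lemma keyNat (a b sa sb : ℕ) (hinj : sa = sb ↔ a = b) :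
    ((if b < a ∧ a ≤ sb ∧ sb < sa then 1 else 0)
    + (if a < b ∧ sb < a ∧ sa < sb then 1 else 0)
    + (if b < a ∧ a ≤ sa ∧ sa < sb then 1 else 0)
    + (if a < b ∧ sa < a ∧ sb < sa then 1 else 0)
    + (if b ≤ sb ∧ sb < sa ∧ sa < a then 1 else 0)
    + (if sa < a ∧ a < b ∧ b ≤ sb then 1 else 0)
    + (if sa < a ∧ b ≤ sb ∧ b < a ∧ sa < sb then 1 else 0) : ℕ)
    = (if b < a ∧ a ≤ sb ∧ a ≤ sa then 1 else 0)
    + (if a < b ∧ sb < a ∧ sa < a then 1 else 0)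
    + (if sa < a ∧ b ≤ sb then 1 else 0) := by
  split_ifs <;> omega

private lemma key (σ : Equiv.Perm (Fin n)) (p : Fin n × Fin n) :
    ((if p.2 < p.1 ∧ p.1 ≤ σ p.2 ∧ σ p.2 < σ p.1 then 1 else 0)
    + (if p.1 < p.2 ∧ σ p.2 < p.1 ∧ σ p.1 < σ p.2 then 1 else 0)
    + (if p.2 < p.1 ∧ p.1 ≤ σ p.1 ∧ σ p.1 < σ p.2 then 1 else 0)
    + (if p.1 < p.2 ∧ σ p.1 < p.1 ∧ σ p.2 < σ p.1 then 1 else 0)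
    + (if p.2 ≤ σ p.2 ∧ σ p.2 < σ p.1 ∧ σ p.1 < p.1 then 1 else 0)
    + (if σ p.1 < p.1 ∧ p.1 < p.2 ∧ p.2 ≤ σ p.2 then 1 else 0)
    + (if σ p.1 < p.1 ∧ p.2 ≤ σ p.2 ∧ p.2 < p.1 ∧ σ p.1 < σ p.2 then 1 else 0) : ℕ)
    = (if p.2 < p.1 ∧ p.1 ≤ σ p.2 ∧ p.1 ≤ σ p.1 then 1 else 0)
    + (if p.1 < p.2 ∧ σ p.2 < p.1 ∧ σ p.1 < p.1 then 1 else 0)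
    + (if σ p.1 < p.1 ∧ p.2 ≤ σ p.2 then 1 else 0) := by
  obtain ⟨i, j⟩ := p
  have hinj : ((σ i : Fin n) : ℕ) = ((σ j : Fin n) : ℕ) ↔ (i : ℕ) = (j : ℕ) := by
    rw [Fin.val_eq_val, Fin.val_eq_val]
    exact σ.apply_eq_iff_eq
  simp only [Fin.lt_def, Fin.le_def]
  exact keyNat _ _ _ _ hinj

private lemma L6 (σ : Equiv.Perm (Fin n)) :
    (univ.filter fun p : Fin n × Fin n => σ p.1 < p.1 ∧ p.1 < p.2 ∧ σ p.2 < σ p.1).card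
    = (univ.filter fun p : Fin n × Fin n =>
        σ p.1 < p.1 ∧ p.2 < p.1 ∧ σ p.1 < σ p.2 ∧ σ p.2 < p.2).card := by
  apply Finset.card_nbij' (fun p => p.swap) (fun p => p.swap)
  · rintro ⟨a, b⟩ hp
    simp only [Finset.mem_coe, mem_filter, mem_univ, true_and, Prod.swap_prod_mk] at *
    obtain ⟨h1, h2, h3⟩ := hp
    exact ⟨lt_trans (lt_trans h3 h1) h2, h2, h3, h1⟩
  · rintro ⟨a, b⟩ hp
    simp only [Finset.mem_coe, mem_filter, mem_univ, true_and, Prod.swap_prod_mk] at *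
    obtain ⟨h1, h2, h3, h4⟩ := hp
    exact ⟨h4, h2, h3⟩
  · intro a _; exact Prod.swap_swap a
  · intro a _; exact Prod.swap_swap a

end CrossAlignAux

/-- For a permutation σ of [n] with exactly k weak exceedances, the number of
crossings plus the number of alignments equals (k−1)(n−k). Pairs p = (i, j). -/
theorem stmt3 (n k : ℕ) (σ : Equiv.Perm (Fin n))
    (hk : (univ.filter fun i : Fin n => i ≤ σ i).card = k) :
    -- crossings: C₊(σ) + C₋(σ)
    ((univ.filter fun p : Fin n × Fin n =>
        p.2 < p.1 ∧ p.1 ≤ σ p.2 ∧ σ p.2 < σ p.1).card +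
      (univ.filter fun p : Fin n × Fin n =>
        p.1 < p.2 ∧ σ p.2 < p.1 ∧ σ p.1 < σ p.2).card) +
    -- alignments: A₊(σ) + A₋(σ) + A₊₋(σ)
    ((univ.filter fun p : Fin n × Fin n =>
        p.2 < p.1 ∧ p.1 ≤ σ p.1 ∧ σ p.1 < σ p.2).card +
      (univ.filter fun p : Fin n × Fin n =>
        p.1 < p.2 ∧ σ p.1 < p.1 ∧ σ p.2 < σ p.1).card +
      ((univ.filter fun p : Fin n × Fin n =>
          p.2 ≤ σ p.2 ∧ σ p.2 < σ p.1 ∧ σ p.1 < p.1).card +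
        (univ.filter fun p : Fin n × Fin n =>
          σ p.1 < p.1 ∧ p.1 < p.2 ∧ p.2 ≤ σ p.2).card)) =
    (k - 1) * (n - k) := by
  classical
  -- the set of non-weak-exceedances
  have hF : (univ.filter fun i : Fin n => σ i < i).card = n - k := by
    have h := Finset.card_filter_add_card_filter_not
      (s := (univ : Finset (Fin n))) (p := fun i => i ≤ σ i)
    simp only [not_le] at h
    rw [hk, Finset.card_univ, Fintype.card_fin] at h
    omega
  -- L1 : pointwise identity summed over all pairs
  have hL1 :
      (univ.filter fun p : Fin n × Fin n =>
        p.2 < p.1 ∧ p.1 ≤ σ p.2 ∧ σ p.2 < σ p.1).card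
      + (univ.filter fun p : Fin n × Fin n =>
        p.1 < p.2 ∧ σ p.2 < p.1 ∧ σ p.1 < σ p.2).card
      + (univ.filter fun p : Fin n × Fin n =>
        p.2 < p.1 ∧ p.1 ≤ σ p.1 ∧ σ p.1 < σ p.2).card
      + (univ.filter fun p : Fin n × Fin n =>
        p.1 < p.2 ∧ σ p.1 < p.1 ∧ σ p.2 < σ p.1).card
      + (univ.filter fun p : Fin n × Fin n =>
        p.2 ≤ σ p.2 ∧ σ p.2 < σ p.1 ∧ σ p.1 < p.1).card
      + (univ.filter fun p : Fin n × Fin n =>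
        σ p.1 < p.1 ∧ p.1 < p.2 ∧ p.2 ≤ σ p.2).card
      + (univ.filter fun p : Fin n × Fin n =>
        σ p.1 < p.1 ∧ p.2 ≤ σ p.2 ∧ p.2 < p.1 ∧ σ p.1 < σ p.2).card
      = (univ.filter fun p : Fin n × Fin n =>
        p.2 < p.1 ∧ p.1 ≤ σ p.2 ∧ p.1 ≤ σ p.1).card
      + (univ.filter fun p : Fin n × Fin n =>
        p.1 < p.2 ∧ σ p.2 < p.1 ∧ σ p.1 < p.1).card
      + (univ.filter fun p : Fin n × Fin n =>
        σ p.1 < p.1 ∧ p.2 ≤ σ p.2).card := by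
    have h := Finset.sum_congr rfl fun (p : Fin n × Fin n) (_ : p ∈ univ) => key σ p
    simp only [Finset.sum_add_distrib] at h
    simp only [Finset.card_filter]
    exact h
  -- L2 : A + B + (n-k) = Q
  have hL2 :
      (univ.filter fun p : Fin n × Fin n =>
        p.2 < p.1 ∧ p.1 ≤ σ p.2 ∧ p.1 ≤ σ p.1).card
      + (univ.filter fun p : Fin n × Fin n =>
        p.1 < p.2 ∧ σ p.2 < p.1 ∧ σ p.1 < p.1).card
      + (univ.filter fun i : Fin n => σ i < i).card
      = (univ.filter fun p : Fin n × Fin n => σ p.2 < p.1 ∧ p.1 ≤ p.2).card := by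
    rw [card_fst (fun p : Fin n × Fin n => p.2 < p.1 ∧ p.1 ≤ σ p.2 ∧ p.1 ≤ σ p.1),
      card_fst (fun p : Fin n × Fin n => p.1 < p.2 ∧ σ p.2 < p.1 ∧ σ p.1 < p.1),
      card_fst (fun p : Fin n × Fin n => σ p.2 < p.1 ∧ p.1 ≤ p.2),
      Finset.card_filter, ← Finset.sum_add_distrib, ← Finset.sum_add_distrib]
    exact Finset.sum_congr rfl fun i _ => L2i σ i
  -- L4 : Q + Sσ = Si
  have hL4 :
      (univ.filter fun p : Fin n × Fin n => σ p.2 < p.1 ∧ p.1 ≤ p.2).card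
      + (∑ j : Fin n, if σ j < j then (σ j).val else 0)
      = ∑ j : Fin n, if σ j < j then j.val else 0 := by
    rw [card_snd (fun p : Fin n × Fin n => σ p.2 < p.1 ∧ p.1 ≤ p.2),
      ← Finset.sum_add_distrib]
    exact Finset.sum_congr rfl fun j _ => L4j σ j
  -- L5 : D + Y + Sσ = Si + X
  have hL5 :
      (univ.filter fun p : Fin n × Fin n =>
        σ p.1 < p.1 ∧ p.2 ≤ σ p.2 ∧ p.2 < p.1 ∧ σ p.1 < σ p.2).card
      + (univ.filter fun p : Fin n × Fin n =>
        σ p.1 < p.1 ∧ p.2 < p.1 ∧ σ p.1 < σ p.2 ∧ σ p.2 < p.2).card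
      + (∑ j : Fin n, if σ j < j then (σ j).val else 0)
      = (∑ j : Fin n, if σ j < j then j.val else 0)
      + (univ.filter fun p : Fin n × Fin n =>
        σ p.1 < p.1 ∧ p.1 < p.2 ∧ σ p.2 < σ p.1).card := by
    rw [card_fst (fun p : Fin n × Fin n =>
        σ p.1 < p.1 ∧ p.2 ≤ σ p.2 ∧ p.2 < p.1 ∧ σ p.1 < σ p.2),
      card_fst (fun p : Fin n × Fin n =>
        σ p.1 < p.1 ∧ p.2 < p.1 ∧ σ p.1 < σ p.2 ∧ σ p.2 < p.2),
      card_fst (fun p : Fin n × Fin n => σ p.1 < p.1 ∧ p.1 < p.2 ∧ σ p.2 < σ p.1),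
      ← Finset.sum_add_distrib, ← Finset.sum_add_distrib, ← Finset.sum_add_distrib]
    exact Finset.sum_congr rfl fun i _ => L5i σ i
  have hL6 := L6 σ
  -- K as a product
  have hK : (univ.filter fun p : Fin n × Fin n => σ p.1 < p.1 ∧ p.2 ≤ σ p.2).card
      = (n - k) * k := by
    have e : (univ.filter fun p : Fin n × Fin n => σ p.1 < p.1 ∧ p.2 ≤ σ p.2)
        = (univ.filter fun i : Fin n => σ i < i) ×ˢ (univ.filter fun i : Fin n => i ≤ σ i) := by
      ext p
      simp only [mem_filter, mem_univ, true_and, Finset.mem_product]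
    rw [e, Finset.card_product, hF, hk]
  have htotal :
      ((univ.filter fun p : Fin n × Fin n =>
          p.2 < p.1 ∧ p.1 ≤ σ p.2 ∧ σ p.2 < σ p.1).card +
        (univ.filter fun p : Fin n × Fin n =>
          p.1 < p.2 ∧ σ p.2 < p.1 ∧ σ p.1 < σ p.2).card) +
      ((univ.filter fun p : Fin n × Fin n =>
          p.2 < p.1 ∧ p.1 ≤ σ p.1 ∧ σ p.1 < σ p.2).card +
        (univ.filter fun p : Fin n × Fin n =>
          p.1 < p.2 ∧ σ p.1 < p.1 ∧ σ p.2 < σ p.1).card +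
        ((univ.filter fun p : Fin n × Fin n =>
            p.2 ≤ σ p.2 ∧ σ p.2 < σ p.1 ∧ σ p.1 < p.1).card +
          (univ.filter fun p : Fin n × Fin n =>
            σ p.1 < p.1 ∧ p.1 < p.2 ∧ p.2 ≤ σ p.2).card)) + (n - k)
      = (n - k) * k := by
    rw [← hK]
    omega
  rcases k with _ | k'
  · have hz : (n - 0) * 0 = 0 := by ring
    rw [hz] at htotal
    have h0 : (0 - 1) * (n - 0) = 0 := by norm_num
    omega
  · have h1 : (n - (k' + 1)) * (k' + 1) = (n - (k' + 1)) * k' + (n - (k' + 1)) := by ring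
    have h2 : (k' + 1 - 1) * (n - (k' + 1)) = (n - (k' + 1)) * k' := by
      rw [Nat.succ_sub_one]; ring
    rw [h2]
    omega
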